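/- The infinite off-diagonal matrix space is not Sym(ℕ)-Noetherian: in the polynomial ring K[y_{ij} : i, j ∈ ℕ, i ≠ j] with Sym(ℕ) acting by simultaneous row and column permutations, the descending chain of Sym(ℕ)-stable Zariski-closed subsets X_i := {p : f_j(g·p) = 0 for all j ≤ i and all g ∈ Sym(ℕ)}, where f_m := y_{12}y_{23}···y_{m-1,m}y_{m1} is the m-cycle monomial, does not stabilise. -/

import Mathlib

open MvPolynomial

/-- Index set of off-diagonal matrix entries. -/
def OffDiag : Type := {q : ℕ × ℕ // q.1 ≠ q.2}

variable (K : Type*) [Field K]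

/-- The `m`-cycle monomial `f_m = y_{12} y_{23} ⋯ y_{m-1,m} y_{m,1}` (for `m ≥ 2`). -/
noncomputable def cycleMon (m : ℕ) (hm : 2 ≤ m) : MvPolynomial OffDiag K :=
  ∏ i ∈ (Finset.Icc 1 m).attach,
    X (⟨(i.1, if i.1 = m then 1 else i.1 + 1), by
      have := Finset.mem_Icc.mp i.2
      dsimp only
      split_ifs <;> omega⟩ : OffDiag)

/-- `Sym(ℕ)` acting on off-diagonal matrices (points) by simultaneous row and
column permutation. -/
def actP (σ : Equiv.Perm ℕ) (p : OffDiag → K) : OffDiag → K :=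
  fun q => p ⟨(σ q.1.1, σ q.1.2), fun h => q.2 (σ.injective h)⟩

/-- The Zariski topology on the space of off-diagonal matrices over `K`. -/
def offDiagZariski : TopologicalSpace (OffDiag → K) :=
  TopologicalSpace.generateFrom {U | ∃ f : MvPolynomial OffDiag K,
    U = {p : OffDiag → K | eval p f ≠ 0}}

/-- The chain `X_i := {p | f_j(g • p) = 0 for all 2 ≤ j ≤ i and all g ∈ Sym(ℕ)}`. -/
def cycleChain (i : ℕ) : Set (OffDiag → K) :=
  {p | ∀ j (hj : 2 ≤ j), j ≤ i → ∀ σ : Equiv.Perm ℕ, eval (actP K σ p) (cycleMon K j hj) = 0}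

/-- The permutation action on the index set. -/
def permMap (σ : Equiv.Perm ℕ) : OffDiag → OffDiag :=
  fun q => ⟨(σ q.1.1, σ q.1.2), fun h => q.2 (σ.injective h)⟩

/-- Witness point: the characteristic function of the `M`-cycle. -/
def wit (M : ℕ) : OffDiag → K :=
  fun q => if q.1.1 ∈ Finset.Icc 1 M ∧ q.1.2 = (if q.1.1 = M then 1 else q.1.1 + 1) then 1 else 0

lemma witA (M : ℕ) (hM : 2 ≤ M) : eval (wit K M) (cycleMon K M hM) = 1 := by
  rw [cycleMon, map_prod]
  apply Finset.prod_eq_one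
  intro i _
  erw [eval_X]
  exact if_pos ⟨i.2, rfl⟩

lemma witB (M j : ℕ) (hj : 2 ≤ j) (hjM : j < M) (σ : Equiv.Perm ℕ) :
    eval (actP K σ (wit K M)) (cycleMon K j hj) = 0 := by
  rw [cycleMon, map_prod]
  by_contra h
  replace h := Finset.prod_ne_zero_iff.mp h
  -- each factor nonzero gives the edge condition
  have hstep : ∀ i : ℕ, 1 ≤ i → i ≤ j →
      σ i ∈ Finset.Icc 1 M ∧ σ (if i = j then 1 else i + 1) = (if σ i = M then 1 else σ i + 1) := by
    intro i h1 h2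
    have hi : i ∈ Finset.Icc 1 j := Finset.mem_Icc.mpr ⟨h1, h2⟩
    have := h ⟨i, hi⟩ (Finset.mem_attach _ _)
    erw [eval_X] at this
    by_contra hc
    exact this (if_neg hc)
  -- rewrite `if a = M then 1 else a+1` as `a % M + 1` on `Icc 1 M`
  have hMpos : 0 < M := by omega
  have hs : ∀ a, a ∈ Finset.Icc 1 M → (if a = M then 1 else a + 1) = a % M + 1 := by
    intro a ha
    rw [Finset.mem_Icc] at ha
    split_ifs with h'
    · subst h'; rw [Nat.mod_self]
    · rw [Nat.mod_eq_of_lt (by omega)]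
  have h1 := hstep 1 le_rfl (by omega)
  obtain ⟨hσ1, -⟩ := h1
  rw [Finset.mem_Icc] at hσ1
  set r := σ 1 - 1 with hr
  have hσ1r : σ 1 = r + 1 := by omega
  have hrM : r < M := by omega
  -- induction around the cycle
  have hind : ∀ k, k < j → σ (1 + k) = (r + k) % M + 1 := by
    intro k
    induction k with
    | zero => intro _; simpa [Nat.mod_eq_of_lt hrM] using hσ1r
    | succ k ih =>
      intro hk
      have ihk := ih (by omega)
      obtain ⟨hmem, hedge⟩ := hstep (1 + k) (by omega) (by omega)
      rw [if_neg (by omega), hs _ hmem] at hedge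
      have : 1 + k + 1 = 1 + (k + 1) := by omega
      rw [this] at hedge
      rw [hedge, ihk]
      have e1 : r + (k + 1) = (r + k) + 1 := by omega
      have h1M : 1 % M = 1 := Nat.mod_eq_of_lt (by omega)
      rw [e1, Nat.add_mod (r + k) 1 M, h1M]
  -- close the cycle at i = j
  obtain ⟨hmemj, hedgej⟩ := hstep j (by omega) le_rfl
  rw [if_pos rfl, hs _ hmemj] at hedgej
  have hj1 : σ j = (r + (j - 1)) % M + 1 := by
    have := hind (j - 1) (by omega)
    have e : 1 + (j - 1) = j := by omega
    rwa [e] at this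
  rw [hj1, hσ1r] at hedgej
  have h1M : 1 % M = 1 := Nat.mod_eq_of_lt (by omega)
  have e2 : ((r + (j - 1)) % M + 1) % M = (r + j) % M := by
    have e3 : r + j = (r + (j - 1)) + 1 := by omega
    rw [e3, Nat.add_mod (r + (j - 1)) 1 M, h1M]
  rw [e2] at hedgej
  have hrj : (r + j) % M = r := by omega
  have hmod : r % M = (r + j) % M := by rw [hrj, Nat.mod_eq_of_lt hrM]
  have hdvd : M ∣ j := by
    have := (Nat.modEq_iff_dvd' (Nat.le_add_right r j)).mp hmod
    simpa using this
  have := Nat.le_of_dvd (by omega) hdvd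
  omega

/-- the infinite off-diagonal matrix space is not
`Sym(ℕ)`-Noetherian: the `X_i` form a descending chain of `Sym(ℕ)`-stable
Zariski-closed subsets which does not stabilise. -/
theorem offDiag_not_symNoetherian :
    (∀ i, @IsClosed _ (offDiagZariski K) (cycleChain K i)) ∧
    (∀ i, cycleChain K (i + 1) ⊆ cycleChain K i) ∧
    (∀ i (σ : Equiv.Perm ℕ), ∀ p ∈ cycleChain K i, actP K σ p ∈ cycleChain K i) ∧
    ¬ ∃ m, ∀ n, m ≤ n → cycleChain K n = cycleChain K m := by
  refine ⟨?_, ?_, ?_, ?_⟩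
  · -- closedness
    intro i
    letI := offDiagZariski K
    have hbasic : ∀ f : MvPolynomial OffDiag K, IsClosed {p : OffDiag → K | eval p f = 0} := by
      intro f
      rw [← isOpen_compl_iff]
      have : {p : OffDiag → K | eval p f = 0}ᶜ = {p : OffDiag → K | eval p f ≠ 0} := rfl
      rw [this]
      exact TopologicalSpace.GenerateOpen.basic _ ⟨f, rfl⟩
    have heq : cycleChain K i = ⋂ (j : ℕ) (hj : 2 ≤ j) (_ : j ≤ i) (σ : Equiv.Perm ℕ),
        {p : OffDiag → K | eval p (rename (permMap σ) (cycleMon K j hj)) = 0} := by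
      ext p
      simp only [cycleChain, Set.mem_iInter, Set.mem_setOf_eq, eval_rename]
      exact Iff.rfl
    rw [heq]
    exact isClosed_iInter fun j => isClosed_iInter fun hj => isClosed_iInter fun _ =>
      isClosed_iInter fun σ => hbasic _
  · -- descending
    intro i p hp j hj hji σ
    exact hp j hj (by omega) σ
  · -- stability
    intro i σ p hp j hj hji τ
    have : actP K τ (actP K σ p) = actP K (σ * τ) p := rfl
    rw [this]
    exact hp j hj hji (σ * τ)
  · -- non-stabilisation
    rintro ⟨m, hm⟩
    set M := max m 1 + 1 with hM
    have hM2 : 2 ≤ M := by omega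
    have hmM : m < M := by omega
    have hwit : wit K M ∈ cycleChain K m := by
      intro j hj hji σ
      exact witB K M j hj (by omega) σ
    have h := hm M (by omega)
    rw [← h] at hwit
    have := hwit M hM2 le_rfl 1
    have hact : actP K 1 (wit K M) = wit K M := rfl
    rw [hact, witA K M hM2] at this
    exact one_ne_zero this
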